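/- In the NeXt fragment of LTL (formulas X^n p), the empty set of models is not finitely representable: every finite base B of formulas has a model, namely the one-state Kripke structure M = ({s}, {(s,s)}, λ) with λ(s) = P (all atoms true) pointed at s satisfies every formula X^k p and hence every base. Consequently, this satisfaction system is not eviction-compatible: for B = {p} and M = Mod(B), FRsubs(Mod(B) \ M) = FRsubs(∅) = ∅. -/
import Mathlib


variable {α β : Type*}

def ModelsOf (sat : β → Set α → Prop) (B : Set α) : Set β := {m | sat m B}

def FRsets (sat : β → Set α → Prop) : Set (Set β) :=
  {X | ∃ B : Set α, B.Finite ∧ ModelsOf sat B = X}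

def FRsubs (sat : β → Set α → Prop) (M : Set β) : Set (Set β) :=
  {X | X ∈ FRsets sat ∧ X ⊆ M ∧ ¬ ∃ Y ∈ FRsets sat, X ⊂ Y ∧ Y ⊆ M}

def FRsups (sat : β → Set α → Prop) (M : Set β) : Set (Set β) :=
  {X | X ∈ FRsets sat ∧ M ⊆ X ∧ ¬ ∃ Y ∈ FRsets sat, M ⊆ Y ∧ Y ⊂ X}


/-- A pointed Kripke structure over atoms \`P\`: states, a total transition
relation, a labeling, and an initial state. -/
structure Kripke (P : Type) : Type 1 where
  S : Type
  R : S → S → Prop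
  total : ∀ s : S, ∃ t : S, R s t
  label : S → Set P
  init : S

/-- A path of \`K\` starting at the initial state. -/
def Kripke.IsPath {P : Type} (K : Kripke P) (π : ℕ → K.S) : Prop :=
  π 0 = K.init ∧ ∀ i, K.R (π i) (π (i + 1))

/-- \`(K, init)\` satisfies the formula \`Xⁿ p\` (encoded as the pair \`(n, p)\`) iff
\`p\` is labelled at the \`n\`-th state of every path from the initial state. -/
def KSat {P : Type} (K : Kripke P) (φ : ℕ × P) : Prop :=
  ∀ π : ℕ → K.S, K.IsPath π → φ.2 ∈ K.label (π φ.1)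

/-- A pointed Kripke model satisfies a base iff it satisfies each of its formulas. -/
def satK {P : Type} (K : Kripke P) (B : Set (ℕ × P)) : Prop :=
  ∀ φ ∈ B, KSat K φ

/-- The one-state Kripke structure looping on itself with all atoms true. -/
def Kall (P : Type) : Kripke P where
  S := PUnit
  R := fun _ _ => True
  total := fun s => ⟨s, trivial⟩
  label := fun _ => Set.univ
  init := PUnit.unit

theorem stmt17 (P : Type) [Nonempty P] :
    (∀ φ : ℕ × P, KSat (Kall P) φ) ∧
    (∀ B : Set (ℕ × P), B.Finite → (ModelsOf satK B).Nonempty) ∧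
    ((∅ : Set (Kripke P)) ∉ FRsets (satK (P := P))) ∧
    (∀ p : P,
      FRsubs satK
        (ModelsOf satK ({((0 : ℕ), p)} : Set (ℕ × P)) \
          ModelsOf satK ({((0 : ℕ), p)} : Set (ℕ × P))) = ∅) := by
  have hall : ∀ φ : ℕ × P, KSat (Kall P) φ := fun φ π _ => Set.mem_univ _
  have hne : ∀ B : Set (ℕ × P), B.Finite → (ModelsOf satK B).Nonempty :=
    fun B _ => ⟨Kall P, fun φ _ => hall φ⟩
  refine ⟨hall, hne, ?_, ?_⟩
  · rintro ⟨B, hB, hEq⟩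
    exact absurd (hEq ▸ hne B hB) Set.not_nonempty_empty
  · intro p
    ext X
    simp only [Set.mem_empty_iff_false, iff_false]
    rintro ⟨⟨B, hB, hEq⟩, hsub, -⟩
    rw [Set.diff_self, Set.subset_empty_iff] at hsub
    exact absurd (hsub ▸ hEq ▸ hne B hB) Set.not_nonempty_empty
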